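/- Let H be a compact metrizable group with Haar probability measure m_H and a translation-invariant compatible metric ρ, let a : G × Y → H be a cocycle over the G-system Y = (Y, ν, S), and let X = (Y × H, ν × m_H, T) be the skew product with T^g(y, h) = (S^g y, a(g,y)h); assume X is ergodic, and let π : X → Y be the projection onto the first coordinate. Let Q = {Q_1, …, Q_k} be a finite Borel partition of H and let P be the partition {Y × Q_1, …, Y × Q_k} of Y × H. Then for any ε > 0 there exists L = L(Q, ε) such that for any Følner sequence (F_n) for G, cov(ν × m_H, P, F_n, ε | π) ≤ L for all sufficiently large n. -/

import Mathlib

open MeasureTheory Filter Set Topology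
open scoped ENNReal Classical symmDiff

section SlowEntropyDefs

variable {G : Type*} [Group G]

/-- A measure-preserving action of a group `G` on a probability space. -/
structure IsMPSystem {X : Type*} [MeasurableSpace X] (T : G → X → X) (μ : Measure X) : Prop where
  prob : IsProbabilityMeasure μ
  meas : ∀ g, Measurable (T g)
  mp : ∀ g, MeasurePreserving (T g) μ μ
  mul : ∀ g g' x, T (g * g') x = T g (T g' x)
  one : ∀ x, T 1 x = x

/-- A factor map between measure-preserving `G`-systems. -/
structure IsFactorMap {X Y : Type*} [MeasurableSpace X] [MeasurableSpace Y]
    (T : G → X → X) (μ : Measure X) (S : G → Y → Y) (ν : Measure Y) (π : X → Y) : Prop where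
  meas : Measurable π
  map : μ.map π = ν
  equiv : ∀ g x, π (T g x) = S g (π x)

/-- An isomorphism of measure-preserving `G`-systems: a factor map with an a.e. two-sided
inverse factor map. -/
def IsIsomorphism {X Y : Type*} [MeasurableSpace X] [MeasurableSpace Y]
    (T : G → X → X) (μ : Measure X) (S : G → Y → Y) (ν : Measure Y) (π : X → Y) : Prop :=
  IsFactorMap T μ S ν π ∧ ∃ ρ : Y → X, IsFactorMap S ν T μ ρ ∧
    (∀ᵐ x ∂μ, ρ (π x) = x) ∧ (∀ᵐ y ∂ν, π (ρ y) = y)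

/-- `μy` is a disintegration of `μ` over the map `π : X → Y` (with `ν` the image of `μ`). -/
structure IsDisintegration {X Y : Type*} [MeasurableSpace X] [MeasurableSpace Y]
    (μ : Measure X) (ν : Measure Y) (π : X → Y) (μy : Y → Measure X) : Prop where
  prob : ∀ y, IsProbabilityMeasure (μy y)
  meas : ∀ s : Set X, MeasurableSet s → Measurable fun y => μy y s
  eq : ∀ s : Set X, MeasurableSet s → μ s = ∫⁻ y, μy y s ∂ν
  supp : ∀ᵐ y ∂ν, μy y (π ⁻¹' {y}) = 1

/-- A (left) Følner sequence for `G`: a sequence of nonempty finite subsets `F n ⊆ G` with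
`|gFₙ ∩ Fₙ| / |Fₙ| → 1` for every `g ∈ G`. -/
def IsFolner (F : ℕ → Finset G) : Prop :=
  (∀ n, (F n).Nonempty) ∧ ∀ g : G,
    Tendsto (fun n => ((((F n).image fun h => g * h) ∩ F n).card : ℝ) / ((F n).card : ℝ))
      atTop (nhds 1)

/-- The normalized Hamming distance `d_{P,F}` between the `(P,F)`-names of two points. -/
noncomputable def hamDist {X : Type*} (T : G → X → X) {r : ℕ} (P : X → Fin r)
    (F : Finset G) (x x' : X) : ℝ :=
  ((F.filter fun f => P (T f x) ≠ P (T f x')).card : ℝ) / (F.card : ℝ)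

/-- The set `E` has `d_{P,F}`-diameter at most `ε`. -/
def diamLE {X : Type*} (T : G → X → X) {r : ℕ} (P : X → Fin r) (F : Finset G)
    (E : Set X) (ε : ℝ) : Prop :=
  ∀ x ∈ E, ∀ x' ∈ E, hamDist T P F x x' ≤ ε

/-- The Hamming `ε`-covering number `cov(λ, P, F, ε)`: the smallest `M` such that there are
sets `E₁, …, E_M` of `d_{P,F}`-diameter at most `ε` whose union has `λ`-measure `≥ 1 - ε`. -/
noncomputable def hamCov {X : Type*} [MeasurableSpace X] (T : G → X → X) (lam : Measure X)
    {r : ℕ} (P : X → Fin r) (F : Finset G) (ε : ℝ) : ℕ :=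
  sInf {M : ℕ | ∃ E : Fin M → Set X, (∀ i, diamLE T P F (E i) ε) ∧
    ENNReal.ofReal (1 - ε) ≤ lam (⋃ i, E i)}

/-- The relative Hamming `ε`-covering number `cov(μ, P, F, ε | π)`, defined through the
disintegration `μy` of `μ` over `π` and the image measure `ν`: the smallest `M` such that
there exists `S ⊆ Y` with `ν S ≥ 1 - ε` and `cov(μ_y, P, F, ε) ≤ M` for every `y ∈ S`. -/
noncomputable def hamCovRel {X Y : Type*} [MeasurableSpace X] [MeasurableSpace Y]
    (T : G → X → X) (μy : Y → Measure X) (ν : Measure Y) {r : ℕ} (P : X → Fin r)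
    (F : Finset G) (ε : ℝ) : ℕ :=
  sInf {M : ℕ | ∃ S : Set Y, MeasurableSet S ∧ ENNReal.ofReal (1 - ε) ≤ ν S ∧
    ∀ y ∈ S, hamCov T (μy y) P F ε ≤ M}

/-- A rate function: an increasing positive function on `ℕ` tending to infinity. -/
def IsRateFunction (U : ℕ → ℝ) : Prop :=
  (∀ n, 0 < U n) ∧ Monotone U ∧ Tendsto U atTop atTop

/-- Relative slow entropy of a partition:
`sup_{ε>0} limsup_n cov(μ, P, F_n, ε | π) / U(|F_n|)`, valued in `[0,∞]`. -/
noncomputable def slowEntropyPartRel {X Y : Type*} [MeasurableSpace X] [MeasurableSpace Y]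
    (T : G → X → X) (μy : Y → Measure X) (ν : Measure Y) {r : ℕ} (P : X → Fin r)
    (U : ℕ → ℝ) (F : ℕ → Finset G) : ℝ≥0∞ :=
  ⨆ ε ∈ Ioi (0 : ℝ),
    Filter.limsup
      (fun n => ENNReal.ofReal ((hamCovRel T μy ν P (F n) ε : ℝ) / U (F n).card)) atTop

/-- Relative slow entropy: the supremum over all finite measurable partitions. -/
noncomputable def slowEntropyRel {X Y : Type*} [MeasurableSpace X] [MeasurableSpace Y]
    (T : G → X → X) (μy : Y → Measure X) (ν : Measure Y)
    (U : ℕ → ℝ) (F : ℕ → Finset G) : ℝ≥0∞ :=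
  ⨆ (r : ℕ) (P : X → Fin r) (_ : Measurable P), slowEntropyPartRel T μy ν P U F

/-- The partition distance `dist_λ(P, Q) = λ{x : P(x) ≠ Q(x)}` between two labeled
partitions indexed by the same set. -/
noncomputable def partDist {Z : Type*} [MeasurableSpace Z] (lam : Measure Z)
    {ι : Type*} (P Q : Z → ι) : ℝ≥0∞ :=
  lam {z | P z ≠ Q z}

/-- Ergodicity of a measure-preserving `G`-action. -/
def IsErgodicAction {X : Type*} [MeasurableSpace X] (T : G → X → X) (μ : Measure X) : Prop :=
  ∀ s : Set X, MeasurableSet s → (∀ g, T g ⁻¹' s = s) → μ s = 0 ∨ μ s = 1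

end SlowEntropyDefs


private lemma compl_meas_ge {α : Type*} [MeasurableSpace α] (m : MeasureTheory.Measure α)
    [MeasureTheory.IsProbabilityMeasure m] {s : Set α} (hs : MeasurableSet s) {ε : ℝ}
    (hε0 : 0 < ε) (hε1 : ε < 1) (h : m s ≤ ENNReal.ofReal (ε/2)) :
    ENNReal.ofReal (1-ε) ≤ m sᶜ := by
  rw [MeasureTheory.prob_compl_eq_one_sub hs]
  refine ENNReal.le_sub_of_add_le_right (MeasureTheory.measure_ne_top m s) ?_
  calc ENNReal.ofReal (1-ε) + m s ≤ ENNReal.ofReal (1-ε) + ENNReal.ofReal (ε/2) :=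
        add_le_add le_rfl h
    _ = ENNReal.ofReal (1-ε+ε/2) := (ENNReal.ofReal_add (by linarith) (by linarith)).symm
    _ ≤ 1 := by rw [← ENNReal.ofReal_one]; exact ENNReal.ofReal_le_ofReal (by linarith)

set_option maxHeartbeats 2000000 in
/-- Proposition `IsometricImpliesBoundedForSpecialPartitions`.
Let `H` be a compact metrizable group with Haar probability measure `mH` and
translation-invariant compatible metric, `a` a cocycle over `Y` into `H`, and let `X`
be the ergodic skew product `(Y × H, ν × mH)`, an extension of `Y` via the first-coordinate
projection.  For a partition `P = {Y × Q_i}` coming from a finite Borel partition `Q` of `H`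
and any `ε > 0`, there is an `L` such that for every Følner sequence,
`cov(ν × mH, P, F_n, ε | π) ≤ L` for all sufficiently large `n`. -/
theorem skew_product_bounded_complexity_special_partitions
    {G Y H : Type*} [Group G] [Countable G]
    [MeasurableSpace Y] [StandardBorelSpace Y]
    [Group H] [MetricSpace H] [IsTopologicalGroup H] [CompactSpace H]
    [MeasurableSpace H] [BorelSpace H]
    (S : G → Y → Y) (ν : Measure Y)
    (mH : Measure H) (hHaar : mH.IsHaarMeasure) (hHprob : IsProbabilityMeasure mH)
    (hdistinv : ∀ g x x' : H, dist (g * x) (g * x') = dist x x')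
    (a : G → Y → H) (ha : ∀ g, Measurable (a g))
    (hY : IsMPSystem S ν)
    (hX : IsMPSystem (fun g (p : Y × H) => (S g p.1, a g p.1 * p.2)) (ν.prod mH))
    (hErg : IsErgodicAction (fun g (p : Y × H) => (S g p.1, a g p.1 * p.2)) (ν.prod mH))
    (k : ℕ) (Q : H → Fin k) (hQ : Measurable Q)
    (ε : ℝ) (hε : 0 < ε) :
    ∃ L : ℕ, ∀ F : ℕ → Finset G, IsFolner F →
      ∀ᶠ n in atTop,
        hamCovRel (fun g (p : Y × H) => (S g p.1, a g p.1 * p.2))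
          (fun y => (Measure.dirac y).prod mH) ν (fun p : Y × H => Q p.2) (F n) ε ≤ L := by
  classical
  haveI := hHprob
  haveI := hY.prob
  rcases le_or_gt 1 ε with hε1 | hε1
  · refine ⟨0, fun F hF => Filter.Eventually.of_forall fun n => ?_⟩
    apply Nat.sInf_le
    refine ⟨∅, MeasurableSet.empty, ?_, fun y hy => hy.elim⟩
    simp [ENNReal.ofReal_eq_zero.2 (by linarith : 1 - ε ≤ 0)]
  have hk : 0 < k := Nat.pos_of_ne_zero fun h => by subst h; exact (Q 1).elim0
  set η : ℝ := ε^3/8 with hηdef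
  have hηpos : 0 < η := by positivity
  have hreg : ∀ i : Fin k, ∃ K : Set H, K ⊆ Q ⁻¹' {i} ∧ IsCompact K ∧
      mH (Q ⁻¹' {i} \ K) < ENNReal.ofReal (η / k) := fun i => by
    obtain ⟨K, hKs, hKc, hKm⟩ := (hQ (measurableSet_singleton i)).exists_isCompact_diff_lt
      (μ := mH) (ε := ENNReal.ofReal (η / k))
      (measure_ne_top _ _) (ENNReal.ofReal_pos.2 (by positivity)).ne'
    exact ⟨K, hKs, hKc, hKm⟩
  choose K hKsub hKcomp hKm using hreg
  set W : Set H := ⋃ i, K i with hWdef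
  have hWmeas : MeasurableSet W :=
    MeasurableSet.iUnion fun i => (hKcomp i).isClosed.measurableSet
  have hWc : mH Wᶜ ≤ ENNReal.ofReal η := by
    have hsub : Wᶜ ⊆ ⋃ i, (Q ⁻¹' {i} \ K i) := by
      intro h hh
      refine mem_iUnion.2 ⟨Q h, ⟨rfl, fun hK => hh (mem_iUnion.2 ⟨Q h, hK⟩)⟩⟩
    calc mH Wᶜ ≤ ∑' i : Fin k, mH (Q ⁻¹' {i} \ K i) :=
          (measure_mono hsub).trans (measure_iUnion_le _)
      _ = ∑ i : Fin k, mH (Q ⁻¹' {i} \ K i) := tsum_fintype _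
      _ ≤ ∑ _i : Fin k, ENNReal.ofReal (η / k) :=
          Finset.sum_le_sum fun i _ => (hKm i).le
      _ = (k : ℝ≥0∞) * ENNReal.ofReal (η / k) := by
          rw [Finset.sum_const, Finset.card_univ, Fintype.card_fin, nsmul_eq_mul]
      _ = ENNReal.ofReal η := by
          rw [← ENNReal.ofReal_natCast, ← ENNReal.ofReal_mul (by positivity)]
          congr 1
          field_simp
  have hpair : ∀ p : Fin k × Fin k, ∃ d : ℝ, 0 < d ∧
      (p.1 ≠ p.2 → ∀ x ∈ K p.1, ∀ y ∈ K p.2, d ≤ dist x y) := by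
    rintro ⟨i, j⟩
    by_cases hij : i = j
    · exact ⟨1, one_pos, fun h => absurd hij h⟩
    · have hdisj : Disjoint (K i) (K j) := by
        refine Set.disjoint_left.2 fun x hxi hxj => hij ?_
        have h1 : Q x = i := hKsub i hxi
        have h2 : Q x = j := hKsub j hxj
        rw [← h1, h2]
      obtain ⟨d, hd, hdis⟩ := hdisj.exists_thickenings (hKcomp i) (hKcomp j).isClosed
      refine ⟨d, hd, fun _ x hx y hy => ?_⟩
      by_contra hlt
      push_neg at hlt
      have hyx : y ∈ Metric.thickening d (K i) :=
        Metric.mem_thickening_iff.2 ⟨x, hx, by rwa [dist_comm]⟩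
      exact (Set.disjoint_left.1 hdis hyx) (Metric.self_subset_thickening hd (K j) hy)
  choose d hdpos hdsep using hpair
  haveI : Nonempty (Fin k) := Fin.pos_iff_nonempty.1 hk
  obtain ⟨δ, hδpos, hδsep⟩ : ∃ δ : ℝ, 0 < δ ∧
      ∀ i j : Fin k, i ≠ j → ∀ x ∈ K i, ∀ y ∈ K j, δ ≤ dist x y := by
    refine ⟨Finset.univ.inf' Finset.univ_nonempty d, ?_, ?_⟩
    · exact (Finset.lt_inf'_iff _).2 fun p _ => hdpos p
    · intro i j hij x hx y hy
      exact le_trans (Finset.inf'_le _ (Finset.mem_univ (i, j))) (hdsep (i, j) hij x hx y hy)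
  obtain ⟨t, htcov⟩ : ∃ t : Finset H, (Set.univ : Set H) ⊆ ⋃ c ∈ t, Metric.ball c (δ/2) :=
    isCompact_univ.elim_finite_subcover (fun c : H => Metric.ball c (δ/2))
      (fun c => Metric.isOpen_ball)
      (fun x _ => mem_iUnion.2 ⟨x, Metric.mem_ball_self (by linarith)⟩)
  refine ⟨t.card, fun F hF => Filter.Eventually.of_forall fun n => ?_⟩
  -- fix n
  set Fn : Finset G := F n with hFndef
  have hFpos : (0:ℝ) < Fn.card := by exact_mod_cast (hF.1 n).card_pos
  set c : ℝ≥0∞ := ENNReal.ofReal (ε/2 * Fn.card) with hcdef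
  have hcne : c ≠ 0 := (ENNReal.ofReal_pos.2 (by positivity)).ne'
  have hcnt : c ≠ ∞ := ENNReal.ofReal_ne_top
  set gfun : Y × H → ℝ≥0∞ :=
    fun p => ((Fn.filter fun f => a f p.1 * p.2 ∉ W).card : ℝ≥0∞) with hgdef
  have hDmeas : ∀ f : G, MeasurableSet {p : Y × H | a f p.1 * p.2 ∉ W} := fun f =>
    (((ha f).comp measurable_fst).mul measurable_snd) hWmeas.compl
  have hgrepr : gfun = fun p => ∑ f ∈ Fn,
      ({p : Y × H | a f p.1 * p.2 ∉ W}.indicator (1 : Y × H → ℝ≥0∞) p) := by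
    funext p
    simp only [hgdef, Finset.card_filter, Nat.cast_sum, Set.indicator_apply, mem_setOf_eq]
    congr 1
    funext f
    split <;> simp
  have hgmeas : Measurable gfun := by
    rw [hgrepr]
    exact Finset.measurable_sum _ fun f _ => measurable_const.indicator (hDmeas f)
  have hint : ∫⁻ p, gfun p ∂(ν.prod mH) ≤ (Fn.card : ℝ≥0∞) * ENNReal.ofReal η := by
    have hsum : ∫⁻ p, ∑ f ∈ Fn, ({p : Y × H | a f p.1 * p.2 ∉ W}.indicator
          (1 : Y × H → ℝ≥0∞) p) ∂(ν.prod mH) =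
        ∑ f ∈ Fn, ∫⁻ p, ({p : Y × H | a f p.1 * p.2 ∉ W}.indicator
          (1 : Y × H → ℝ≥0∞) p) ∂(ν.prod mH) :=
      lintegral_finset_sum _ fun f _ => measurable_const.indicator (hDmeas f)
    have heach : ∀ f ∈ Fn, ∫⁻ p, ({p : Y × H | a f p.1 * p.2 ∉ W}.indicator
        (1 : Y × H → ℝ≥0∞) p) ∂(ν.prod mH) = mH Wᶜ := by
      intro f _
      rw [lintegral_indicator_one (hDmeas f)]
      have hpre : {p : Y × H | a f p.1 * p.2 ∉ W} =
          (fun p : Y × H => (S f p.1, a f p.1 * p.2)) ⁻¹' ((Set.univ : Set Y) ×ˢ Wᶜ) := by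
        ext p; simp [Set.mem_prod]
      rw [hpre, (hX.mp f).measure_preimage
          ((MeasurableSet.univ.prod hWmeas.compl).nullMeasurableSet),
        Measure.prod_prod, measure_univ, one_mul]
    calc ∫⁻ p, gfun p ∂(ν.prod mH)
        = ∑ f ∈ Fn, ∫⁻ p, ({p : Y × H | a f p.1 * p.2 ∉ W}.indicator
            (1 : Y × H → ℝ≥0∞) p) ∂(ν.prod mH) := by rw [hgrepr]; exact hsum
      _ = ∑ _f ∈ Fn, mH Wᶜ := Finset.sum_congr rfl heach
      _ = Fn.card • mH Wᶜ := Finset.sum_const _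
      _ = (Fn.card : ℝ≥0∞) * mH Wᶜ := nsmul_eq_mul _ _
      _ ≤ (Fn.card : ℝ≥0∞) * ENNReal.ofReal η := mul_le_mul_right hWc _
  set A : Set (Y × H) := {p | c < gfun p} with hAdef
  have hAmeas : MeasurableSet A := measurableSet_lt measurable_const hgmeas
  have hAle : (ν.prod mH) A ≤ ENNReal.ofReal (ε^2/4) := by
    have h1 : c * (ν.prod mH) {p | c ≤ gfun p} ≤ (Fn.card : ℝ≥0∞) * ENNReal.ofReal η :=
      le_trans (mul_meas_ge_le_lintegral₀ hgmeas.aemeasurable c) hint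
    have h3 : (Fn.card : ℝ≥0∞) * ENNReal.ofReal η = ENNReal.ofReal (ε^2/4) * c := by
      rw [hcdef, ← ENNReal.ofReal_natCast, ← ENNReal.ofReal_mul (by positivity),
        ← ENNReal.ofReal_mul (by positivity)]
      congr 1
      rw [hηdef]; ring
    rw [← ENNReal.mul_le_mul_iff_left hcne hcnt]
    calc (ν.prod mH) A * c = c * (ν.prod mH) A := mul_comm _ _
      _ ≤ c * (ν.prod mH) {p | c ≤ gfun p} := by
          have hAsub : A ⊆ {p | c ≤ gfun p} := fun p hp => show c ≤ gfun p from le_of_lt hp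
          exact mul_le_mul_right (measure_mono hAsub) _
      _ ≤ (Fn.card : ℝ≥0∞) * ENNReal.ofReal η := h1
      _ = ENNReal.ofReal (ε^2/4) * c := h3
  set c2 : ℝ≥0∞ := ENNReal.ofReal (ε/2) with hc2def
  have hc2ne : c2 ≠ 0 := (ENNReal.ofReal_pos.2 (by positivity)).ne'
  have hc2nt : c2 ≠ ∞ := ENNReal.ofReal_ne_top
  set fY : Y → ℝ≥0∞ := fun y => mH (Prod.mk y ⁻¹' A) with hfYdef
  have hfYmeas : Measurable fY := measurable_measure_prodMk_left hAmeas
  set B : Set Y := {y | c2 < fY y} with hBdef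
  have hBmeas : MeasurableSet B := measurableSet_lt measurable_const hfYmeas
  have hBle : ν B ≤ c2 := by
    have h1 : c2 * ν {y | c2 ≤ fY y} ≤ ∫⁻ y, fY y ∂ν :=
      mul_meas_ge_le_lintegral₀ hfYmeas.aemeasurable c2
    have h2 : ∫⁻ y, fY y ∂ν = (ν.prod mH) A := (Measure.prod_apply hAmeas).symm
    have h3 : c2 * ν B ≤ c2 * c2 := by
      calc c2 * ν B ≤ c2 * ν {y | c2 ≤ fY y} := by
            have hBsub : B ⊆ {y | c2 ≤ fY y} := fun y hy => show c2 ≤ fY y from le_of_lt hy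
            exact mul_le_mul_right (measure_mono hBsub) _
        _ ≤ (ν.prod mH) A := by rw [← h2]; exact h1
        _ ≤ ENNReal.ofReal (ε^2/4) := hAle
        _ = c2 * c2 := by
            rw [hc2def, ← ENNReal.ofReal_mul (by positivity)]
            congr 1; ring
    have := (ENNReal.mul_le_mul_iff_right hc2ne hc2nt).1 h3
    exact this
  apply Nat.sInf_le
  refine ⟨Bᶜ, hBmeas.compl, compl_meas_ge ν hBmeas hε hε1 hBle, fun y hy => ?_⟩
  have hyle : mH (Prod.mk y ⁻¹' A) ≤ c2 := not_lt.1 hy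
  have hGmeas : MeasurableSet (Prod.mk y ⁻¹' A) := hAmeas.preimage measurable_prodMk_left
  set Gd : Set H := (Prod.mk y ⁻¹' A)ᶜ with hGddef
  have hGdμ : ENNReal.ofReal (1-ε) ≤ mH Gd := compl_meas_ge mH hGmeas hε hε1 hyle
  apply Nat.sInf_le
  refine ⟨fun i => {y} ×ˢ (Metric.ball ((t.equivFin.symm i : H)) (δ/2) ∩ Gd), ?_, ?_⟩
  · -- diameter bound
    intro i x hx x' hx'
    rw [Set.mem_prod] at hx hx'
    have hxy : x.1 = y := hx.1
    have hx'y : x'.1 = y := hx'.1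
    have hxb := hx.2.1
    have hx'b := hx'.2.1
    have hxg := hx.2.2
    have hx'g := hx'.2.2
    have hdd : dist x.2 x'.2 < δ := by
      calc dist x.2 x'.2 ≤ dist x.2 (t.equivFin.symm i : H) + dist x'.2 (t.equivFin.symm i : H) :=
            dist_triangle_right _ _ _
        _ < δ/2 + δ/2 := add_lt_add hxb hx'b
        _ = δ := by ring
    have hcount : ∀ z : H, z ∈ Gd →
        ((Fn.filter fun f => a f y * z ∉ W).card : ℝ) ≤ ε/2 * Fn.card := by
      intro z hz
      have hzA : ¬ c < gfun (y, z) := hz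
      have hle : ((Fn.filter fun f => a f y * z ∉ W).card : ℝ≥0∞) ≤
          ENNReal.ofReal (ε/2 * Fn.card) := not_lt.1 hzA
      rw [← ENNReal.ofReal_natCast] at hle
      exact (ENNReal.ofReal_le_ofReal_iff (by positivity)).1 hle
    have hsub : (Fn.filter fun f =>
          (fun p : Y × H => Q p.2) ((fun g (p : Y × H) => (S g p.1, a g p.1 * p.2)) f x) ≠
          (fun p : Y × H => Q p.2) ((fun g (p : Y × H) => (S g p.1, a g p.1 * p.2)) f x')) ⊆
        (Fn.filter fun f => a f y * x.2 ∉ W) ∪ (Fn.filter fun f => a f y * x'.2 ∉ W) := by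
      intro f hf
      rw [Finset.mem_filter] at hf
      obtain ⟨hfF, hfne⟩ := hf
      simp only [hxy, hx'y] at hfne
      rw [Finset.mem_union, Finset.mem_filter, Finset.mem_filter]
      by_cases h1 : a f y * x.2 ∈ W
      · right
        refine ⟨hfF, fun h2 => ?_⟩
        obtain ⟨i1, hi1⟩ := mem_iUnion.1 h1
        obtain ⟨i2, hi2⟩ := mem_iUnion.1 h2
        by_cases hii : i1 = i2
        · subst hii
          have e1 : Q (a f y * x.2) = i1 := hKsub i1 hi1
          have e2 : Q (a f y * x'.2) = i1 := hKsub i1 hi2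
          exact hfne (by rw [e1, e2])
        · have := hδsep i1 i2 hii _ hi1 _ hi2
          rw [hdistinv] at this
          linarith
      · exact Or.inl ⟨hfF, h1⟩
    show hamDist _ _ _ x x' ≤ ε
    rw [hamDist, div_le_iff₀ hFpos]
    calc ((Fn.filter fun f => _ ≠ _).card : ℝ) ≤
        (((Fn.filter fun f => a f y * x.2 ∉ W) ∪ (Fn.filter fun f => a f y * x'.2 ∉ W)).card : ℝ) := by
          exact_mod_cast Nat.cast_le.2 (Finset.card_le_card hsub)
      _ ≤ ((Fn.filter fun f => a f y * x.2 ∉ W).card : ℝ) +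
          ((Fn.filter fun f => a f y * x'.2 ∉ W).card : ℝ) := by
          exact_mod_cast Nat.cast_le.2 (Finset.card_union_le _ _)
      _ ≤ ε/2 * Fn.card + ε/2 * Fn.card := add_le_add (hcount _ hxg) (hcount _ hx'g)
      _ = ε * Fn.card := by ring
  · -- covering bound
    calc ENNReal.ofReal (1-ε) ≤ mH Gd := hGdμ
      _ = (Measure.dirac y).prod mH ({y} ×ˢ Gd) := by
          rw [Measure.prod_prod, Measure.dirac_apply_of_mem (mem_singleton y), one_mul]
      _ ≤ _ := by
          refine measure_mono fun p hp => ?_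
          rw [Set.mem_prod] at hp
          obtain ⟨c0, hc0t, hc0b⟩ := mem_iUnion₂.1 (htcov (mem_univ p.2))
          exact mem_iUnion.2 ⟨t.equivFin ⟨c0, hc0t⟩,
            Set.mem_prod.2 ⟨hp.1, by rw [Equiv.symm_apply_apply]; exact ⟨hc0b, hp.2⟩⟩⟩
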